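/- Let F be a finite field with q elements. The number of tuples (t₁, t₂, t₃, a₁₂, a₂₃, a₁₃) with t₁, t₂, t₃ ∈ Fˣ and a₁₂, a₂₃, a₁₃ ∈ F satisfying the three equations t₁ + a₁₃ = 0, t₂ + 1 + a₂₃·t₁⁻¹·a₁₂ = 0, and t₃ + t₁⁻¹ + t₁⁻²·a₁₂·t₂⁻¹·a₂₃ = 0, equals (q−1)³ + q(q−1). -/

import Mathlib

section Aux

variable {F : Type*} [Field F]

private lemma aug_aux1 (t v a b : F) (ht : t ≠ 0) (hv : v ≠ 0)
    (h : v = -(1 + a * b)) :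
    (t * v)⁻¹ + t⁻¹ + (t⁻¹) ^ 2 * (a * t) * v⁻¹ * b = 0 := by
  field_simp
  linear_combination h

private lemma aug_aux2 (t₁ t₂ t₃ a₁₂ a₂₃ : F) (h1 : t₁ ≠ 0) (h2 : t₂ ≠ 0)
    (e2 : t₂ + 1 + a₂₃ * t₁⁻¹ * a₁₂ = 0)
    (e3 : t₃ + t₁⁻¹ + (t₁⁻¹) ^ 2 * a₁₂ * t₂⁻¹ * a₂₃ = 0) :
    (t₁ * t₂)⁻¹ = t₃ := by
  field_simp at e2 e3
  have key : t₁ ^ 2 * (t₃ * t₁ * t₂) = t₁ ^ 2 * 1 := by linear_combination t₁ * (e3 - e2)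
  have key2 : t₃ * t₁ * t₂ = 1 := mul_left_cancel₀ (pow_ne_zero 2 h1) key
  field_simp
  linear_combination -key2

private def hypEquiv (F : Type*) [Field F] : {p : F × F // p.1 * p.2 = -1} ≃ Fˣ where
  toFun p := Units.mk0 p.1.1 (by
    intro h
    have h2 := p.2
    rw [h, zero_mul] at h2
    exact one_ne_zero (neg_eq_zero.mp h2.symm))
  invFun u := ⟨(u, -(u⁻¹ : Fˣ)), by simp [mul_comm]⟩
  left_inv p := by
    rcases p with ⟨⟨a, b⟩, h⟩
    have ha : a ≠ 0 := by
      intro h0; rw [h0, zero_mul] at h; exact one_ne_zero (neg_eq_zero.mp h.symm)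
    have hb : b = -a⁻¹ := by field_simp; linear_combination h
    subst hb
    ext <;> simp
  right_inv u := by ext; simp

private def mainEquiv : {p : Fˣ × Fˣ × Fˣ × F × F × F //
        ((p.1 : F) + p.2.2.2.2.2 = 0) ∧
        ((p.2.1 : F) + 1 + p.2.2.2.2.1 * (p.1 : F)⁻¹ * p.2.2.2.1 = 0) ∧
        ((p.2.2.1 : F) + (p.1 : F)⁻¹ +
          ((p.1 : F)⁻¹) ^ 2 * p.2.2.2.1 * (p.2.1 : F)⁻¹ * p.2.2.2.2.1 = 0)}
    ≃ Fˣ × {p : F × F // p.1 * p.2 ≠ -1} where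
  toFun x := (x.1.1, ⟨(x.1.2.2.2.1 * (x.1.1 : F)⁻¹, x.1.2.2.2.2.1), by
    rcases x with ⟨⟨t₁, t₂, t₃, a₁₂, a₂₃, a₁₃⟩, h1, h2, h3⟩
    intro heq
    apply t₂.ne_zero
    linear_combination h2 - heq⟩)
  invFun x := ⟨(x.1,
      Units.mk0 (-(1 + x.2.1.1 * x.2.1.2)) (by
        intro h0; apply x.2.2; linear_combination -h0),
      (x.1 * Units.mk0 (-(1 + x.2.1.1 * x.2.1.2)) (by
        intro h0; apply x.2.2; linear_combination -h0))⁻¹,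
      x.2.1.1 * (x.1 : F), x.2.1.2, -(x.1 : F)), by
    rcases x with ⟨t₁, ⟨a, b⟩, hab⟩
    have ht₁ : (t₁ : F) ≠ 0 := t₁.ne_zero
    have hv : -(1 + a * b) ≠ 0 := fun h0 => hab (by linear_combination -h0)
    refine ⟨by ring, ?_, ?_⟩
    · simp only [Units.val_mk0]
      field_simp
      ring
    · simp only [Units.val_mul, Units.val_inv_eq_inv_val, Units.val_mk0]
      exact aug_aux1 (t₁ : F) (-(1 + a * b)) a b ht₁ hv rfl⟩
  left_inv x := by
    rcases x with ⟨⟨t₁, t₂, t₃, a₁₂, a₂₃, a₁₃⟩, h1, h2, h3⟩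
    have ht₁ : (t₁ : F) ≠ 0 := t₁.ne_zero
    have ht₂ : (t₂ : F) ≠ 0 := t₂.ne_zero
    have h2' : (t₂ : F) = -(1 + a₁₂ * (t₁ : F)⁻¹ * a₂₃) := by linear_combination h2
    ext
    · rfl
    · exact h2'.symm
    · show ((((t₁ * Units.mk0 _ _ : Fˣ))⁻¹ : Fˣ) : F) = (t₃ : F)
      rw [Units.val_inv_eq_inv_val]
      simp only [Units.val_mul, Units.val_mk0]
      rw [← h2']
      exact aug_aux2 (t₁ : F) (t₂ : F) (t₃ : F) a₁₂ a₂₃ ht₁ ht₂ h2 h3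
    · show a₁₂ * (t₁ : F)⁻¹ * (t₁ : F) = a₁₂
      field_simp
    · rfl
    · show -(t₁ : F) = a₁₃
      linear_combination -h1
  right_inv x := by
    rcases x with ⟨t₁, ⟨a, b⟩, hab⟩
    have ht₁ : (t₁ : F) ≠ 0 := t₁.ne_zero
    ext
    · rfl
    · show a * (t₁ : F) * (t₁ : F)⁻¹ = a
      field_simp
    · rfl

private lemma card_hyp_compl (F : Type*) [Field F] [Fintype F] :
    Nat.card {p : F × F // p.1 * p.2 ≠ -1}
      = (Fintype.card F) ^ 2 - (Fintype.card F - 1) := by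
  classical
  rw [Nat.card_eq_fintype_card, Fintype.card_subtype_compl]
  congr 1
  · simp [Fintype.card_prod, sq]
  · rw [Fintype.card_congr (hypEquiv F), Fintype.card_units]

end Aux

/-- point count of the augmentation equations for the 6-valent vertex
example, over a finite field with `q` elements. -/
theorem six_valent_augmentation_count
    (F : Type*) [Field F] [Fintype F] (q : ℕ) (hq : Fintype.card F = q) :
    Nat.card {p : Fˣ × Fˣ × Fˣ × F × F × F //
        ((p.1 : F) + p.2.2.2.2.2 = 0) ∧
        ((p.2.1 : F) + 1 + p.2.2.2.2.1 * (p.1 : F)⁻¹ * p.2.2.2.1 = 0) ∧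
        ((p.2.2.1 : F) + (p.1 : F)⁻¹ +
          ((p.1 : F)⁻¹) ^ 2 * p.2.2.2.1 * (p.2.1 : F)⁻¹ * p.2.2.2.2.1 = 0)} =
      (q - 1) ^ 3 + q * (q - 1) := by
  classical
  rw [Nat.card_congr (mainEquiv (F := F)), Nat.card_prod, card_hyp_compl F,
    Nat.card_eq_fintype_card, Fintype.card_units, hq]
  have hq1 : 1 ≤ q := hq ▸ Fintype.card_pos
  obtain ⟨n, rfl⟩ : ∃ n, q = n + 1 := ⟨q - 1, by omega⟩
  have h1 : (n + 1) ^ 2 - (n + 1 - 1) = n ^ 2 + n + 1 := by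
    have : (n + 1) ^ 2 = n ^ 2 + 2 * n + 1 := by ring
    omega
  simp only [Nat.add_sub_cancel] at h1 ⊢
  rw [h1]
  ring
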